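/- Let $\phi : \mathbb{R} \to \mathbb{R}$ be convex with $\phi(0)=0$ and $1 \in \partial\phi(0)$, and let $\tau > 0$. Let $f : \mathcal{Z} \to [a,b]$ be a bounded measurable function and $\mathbf{z}$ a random variable. Then the unrestricted infimum $\inf_{\mu \in \mathbb{R}} \{ \tau\,\mathbb{E}[\phi((f(\mathbf{z})-\mu)/\tau)] + \mu\}$ equals the restricted infimum $\inf_{\mu \in [a,b]} \{ \tau\,\mathbb{E}[\phi((f(\mathbf{z})-\mu)/\tau)] + \mu\}$. In particular, defining $\lambda(\mu) = \tau\,\mathbb{E}[\phi((f(\mathbf{z})-\mu)/\tau)] + \mu$, one has $\lambda(b+\epsilon) \ge \lambda(b)$ and $\lambda(a-\epsilon) \ge \lambda(a)$ for every $\epsilon > 0$. -/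

import Mathlib

open MeasureTheory

private lemma slopeL {φ : ℝ → ℝ} (hconv : ConvexOn ℝ Set.univ φ)
    (hφ0 : φ 0 = 0) (hsub : ∀ t : ℝ, t ≤ φ t)
    {x y : ℝ} (hxy : x ≤ y) (hy : y ≤ 0) : φ y ≤ φ x + (y - x) := by
  rcases eq_or_lt_of_le hxy with rfl | hlt
  · simp
  rcases eq_or_lt_of_le hy with rfl | hy0
  · have := hsub x; simp only [hφ0]; linarith
  · have h := hconv.slope_mono_adjacent (Set.mem_univ x) (Set.mem_univ (0:ℝ)) hlt hy0
    rw [div_le_div_iff₀ (by linarith) (by linarith)] at h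
    nlinarith [hsub y, mul_nonneg (sub_nonneg.2 (hsub y)) (le_of_lt (sub_pos.2 hlt))]

private lemma slopeR {φ : ℝ → ℝ} (hconv : ConvexOn ℝ Set.univ φ)
    (hφ0 : φ 0 = 0) (hsub : ∀ t : ℝ, t ≤ φ t)
    {x y : ℝ} (hx : 0 ≤ x) (hxy : x ≤ y) : φ x + (y - x) ≤ φ y := by
  rcases eq_or_lt_of_le hxy with rfl | hlt
  · simp
  rcases eq_or_lt_of_le hx with rfl | hx0
  · have := hsub y; simp only [hφ0]; linarith
  · have h := hconv.slope_mono_adjacent (Set.mem_univ (0:ℝ)) (Set.mem_univ y) hx0 hlt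
    rw [div_le_div_iff₀ (by linarith) (by linarith)] at h
    nlinarith [hsub x, mul_nonneg (sub_nonneg.2 (hsub x)) (le_of_lt (sub_pos.2 hlt))]

/-- For a disutility function `φ` (nondecreasing, convex, `φ(0)=0`, `φ(t) ≥ t`),
`τ > 0`, and a random variable `f` taking values in `[a,b]`, the OCE objective
`λ(μ) = τ 𝔼[φ((f - μ)/τ)] + μ` attains the same infimum over `ℝ` as over `[a,b]`;
in particular `λ(b+ε) ≥ λ(b)` and `λ(a-ε) ≥ λ(a)` for every `ε > 0`. -/
theorem stmt2 {Ω : Type*} [MeasurableSpace Ω] (P : Measure Ω) [IsProbabilityMeasure P]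
    (φ : ℝ → ℝ) (hmono : Monotone φ) (hconv : ConvexOn ℝ Set.univ φ)
    (hφ0 : φ 0 = 0) (hsub : ∀ t : ℝ, t ≤ φ t)
    (τ : ℝ) (hτ : 0 < τ) (a b : ℝ) (hab : a ≤ b)
    (f : Ω → ℝ) (hf : ∀ ω, f ω ∈ Set.Icc a b) (hmeas : Measurable f)
    (hint : ∀ μ : ℝ, Integrable (fun ω => φ ((f ω - μ)/τ)) P) :
    (sInf (Set.range fun μ : ℝ => τ * ∫ ω, φ ((f ω - μ)/τ) ∂P + μ)
      = sInf ((fun μ : ℝ => τ * ∫ ω, φ ((f ω - μ)/τ) ∂P + μ) '' Set.Icc a b)) ∧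
    (∀ ε : ℝ, 0 < ε →
      τ * ∫ ω, φ ((f ω - b)/τ) ∂P + b ≤ τ * ∫ ω, φ ((f ω - (b+ε))/τ) ∂P + (b+ε)) ∧
    (∀ ε : ℝ, 0 < ε →
      τ * ∫ ω, φ ((f ω - a)/τ) ∂P + a ≤ τ * ∫ ω, φ ((f ω - (a-ε))/τ) ∂P + (a-ε)) := by
  have hτ' : τ ≠ 0 := hτ.ne'
  set g : ℝ → ℝ := fun μ : ℝ => τ * ∫ ω, φ ((f ω - μ)/τ) ∂P + μ with hg
  -- right-side monotonicity: ν ≥ b ⇒ g b ≤ g ν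
  have hR : ∀ ν : ℝ, b ≤ ν → g b ≤ g ν := by
    intro ν hν
    have hpt : ∀ ω, φ ((f ω - b)/τ) ≤ φ ((f ω - ν)/τ) + (ν - b)/τ := by
      intro ω
      have hxy : (f ω - ν)/τ ≤ (f ω - b)/τ := by gcongr
      have hy : (f ω - b)/τ ≤ 0 :=
        div_nonpos_of_nonpos_of_nonneg (by linarith [(hf ω).2]) hτ.le
      calc φ ((f ω - b)/τ)
          ≤ φ ((f ω - ν)/τ) + ((f ω - b)/τ - (f ω - ν)/τ) := slopeL hconv hφ0 hsub hxy hy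
        _ = φ ((f ω - ν)/τ) + (ν - b)/τ := by ring
    have hI : (∫ ω, φ ((f ω - b)/τ) ∂P) ≤ (∫ ω, φ ((f ω - ν)/τ) ∂P) + (ν - b)/τ := by
      have h := integral_mono (hint b) ((hint ν).add (integrable_const _)) hpt
      simp only [Pi.add_apply] at h
      rwa [integral_add (hint ν) (integrable_const _), integral_const, probReal_univ,
        one_smul] at h
    have h2 := mul_le_mul_of_nonneg_left hI hτ.le
    rw [mul_add, mul_div_cancel₀ _ hτ'] at h2
    simp only [hg]; linarith
  -- left-side monotonicity: ν ≤ a ⇒ g a ≤ g ν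
  have hL : ∀ ν : ℝ, ν ≤ a → g a ≤ g ν := by
    intro ν hν
    have hpt : ∀ ω, φ ((f ω - a)/τ) + (a - ν)/τ ≤ φ ((f ω - ν)/τ) := by
      intro ω
      have hx : 0 ≤ (f ω - a)/τ := div_nonneg (by linarith [(hf ω).1]) hτ.le
      have hxy : (f ω - a)/τ ≤ (f ω - ν)/τ := by gcongr
      calc φ ((f ω - a)/τ) + (a - ν)/τ
          = φ ((f ω - a)/τ) + ((f ω - ν)/τ - (f ω - a)/τ) := by ring
        _ ≤ φ ((f ω - ν)/τ) := slopeR hconv hφ0 hsub hx hxy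
    have hI : (∫ ω, φ ((f ω - a)/τ) ∂P) + (a - ν)/τ ≤ ∫ ω, φ ((f ω - ν)/τ) ∂P := by
      have h := integral_mono ((hint a).add (integrable_const _)) (hint ν) hpt
      simp only [Pi.add_apply] at h
      rwa [integral_add (hint a) (integrable_const _), integral_const, probReal_univ,
        one_smul] at h
    have h2 := mul_le_mul_of_nonneg_left hI hτ.le
    rw [mul_add, mul_div_cancel₀ _ hτ'] at h2
    simp only [hg]; linarith
  have hfint : Integrable f P := by
    refine (integrable_const (max |a| |b|)).mono' hmeas.aestronglyMeasurable
      (ae_of_all _ fun ω => ?_)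
    rw [Real.norm_eq_abs]
    exact abs_le_max_abs_abs (hf ω).1 (hf ω).2
  have hlb : ∀ μ : ℝ, (∫ ω, f ω ∂P) ≤ g μ := by
    intro μ
    have h1 : Integrable (fun ω => (f ω - μ)/τ) P := (hfint.sub (integrable_const μ)).div_const τ
    have h2 := integral_mono h1 (hint μ) (fun ω => hsub _)
    have h3 : (∫ ω, (f ω - μ)/τ ∂P) = ((∫ ω, f ω ∂P) - μ)/τ := by
      rw [integral_div, integral_sub hfint (integrable_const μ), integral_const, probReal_univ]
      simp
    rw [h3] at h2
    have h4 := mul_le_mul_of_nonneg_left h2 hτ.le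
    rw [mul_div_cancel₀ _ hτ'] at h4
    simp only [hg]; linarith
  have hbdd : BddBelow (Set.range g) := ⟨_, by rintro y ⟨μ, rfl⟩; exact hlb μ⟩
  have hbddT : BddBelow (g '' Set.Icc a b) := hbdd.mono (Set.image_subset_range g _)
  refine ⟨le_antisymm ?_ ?_, fun ε hε => hR (b+ε) (by linarith),
    fun ε hε => hL (a-ε) (by linarith)⟩
  · exact csInf_le_csInf hbdd ⟨g a, ⟨a, ⟨le_refl a, hab⟩, rfl⟩⟩ (Set.image_subset_range g _)
  · refine le_csInf (Set.range_nonempty g) ?_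
    rintro y ⟨μ, rfl⟩
    rcases le_total μ a with h | h
    · exact le_trans (csInf_le hbddT ⟨a, ⟨le_refl a, hab⟩, rfl⟩) (hL μ h)
    rcases le_total μ b with h2 | h2
    · exact csInf_le hbddT ⟨μ, ⟨h, h2⟩, rfl⟩
    · exact le_trans (csInf_le hbddT ⟨b, ⟨hab, le_refl b⟩, rfl⟩) (hR μ h2)
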